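/- The cardinality of the monoid AO_n of order-preserving partial injections on {1,...,n} lying in the alternating inverse monoid equals C(2n,n) − ⌊n²/2⌋. -/

import Mathlib

/-- Partial transformations on `Fin n`, represented as `Option`-valued maps. -/
abbrev PT (n : ℕ) := Fin n → Option (Fin n)

/-- Left-to-right composition of partial maps: `x (pcomp f g) = (x f) g`. -/
def pcomp {n : ℕ} (f g : PT n) : PT n := fun x => (f x).bind g

/-- The identity partial map. -/
def pid (n : ℕ) : PT n := fun x => some x

instance PTMonoid (n : ℕ) : Monoid (PT n) where
  mul := pcomp
  one := pid n
  mul_assoc f g h := funext fun x => by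
    show ((f x).bind g).bind h = (f x).bind fun y => (g y).bind h
    cases f x <;> rfl
  one_mul f := rfl
  mul_one f := funext fun x => by
    show (f x).bind (fun y => some y) = f x
    cases f x <;> rfl

/-- `f` is injective on its domain. -/
def pInj {n : ℕ} (f : PT n) : Prop := ∀ x y a, f x = some a → f y = some a → x = y

/-- The domain of a partial map. -/
def pDom {n : ℕ} (f : PT n) : Finset (Fin n) := Finset.univ.filter fun x => (f x).isSome

/-- The image of a partial map. -/
def pIm {n : ℕ} (f : PT n) : Finset (Fin n) := Finset.univ.filter fun b => ∃ x, f x = some b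

/-- The rank of a partial map is the size of its domain. -/
def prank {n : ℕ} (f : PT n) : ℕ := (pDom f).card

/-- Order-preserving partial maps. -/
def orderPres {n : ℕ} (f : PT n) : Prop :=
  ∀ x y a b, f x = some a → f y = some b → x ≤ y → a ≤ b

/-- Order-reversing partial maps. -/
def orderRev {n : ℕ} (f : PT n) : Prop :=
  ∀ x y a b, f x = some a → f y = some b → x ≤ y → b ≤ a

/-- Monotone partial maps. -/
def isMonotonePT {n : ℕ} (f : PT n) : Prop := orderPres f ∨ orderRev f

/-- The permutation `σ` extends the partial map `f`. -/
def extendsTo {n : ℕ} (σ : Equiv.Perm (Fin n)) (f : PT n) : Prop :=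
  ∀ x a, f x = some a → σ x = a

/-- Membership in the alternating inverse monoid `AI_n`: an injective partial map of
rank `≤ n - 2`, or one that extends to an even permutation. -/
def inAI {n : ℕ} (f : PT n) : Prop :=
  pInj f ∧ (prank f + 2 ≤ n ∨
    ∃ σ : Equiv.Perm (Fin n), σ ∈ alternatingGroup (Fin n) ∧ extendsTo σ f)

/-- `AO_n = AI_n ∩ POI_n`. -/
def AO (n : ℕ) : Set (PT n) := {f | orderPres f ∧ inAI f}

/-- `AM_n = AI_n ∩ PMI_n`. -/
def AM (n : ℕ) : Set (PT n) := {f | isMonotonePT f ∧ inAI f}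

/-- Green's `J`-relation relative to a submonoid-like subset `S` (containing the identity):
`a J b` iff each lies in the two-sided principal ideal of the other. -/
def JRelIn {n : ℕ} (S : Set (PT n)) (a b : PT n) : Prop :=
  (∃ u v, u ∈ S ∧ v ∈ S ∧ a = u * b * v) ∧ (∃ u v, u ∈ S ∧ v ∈ S ∧ b = u * a * v)

open Finset

lemma mem_pDom {n : ℕ} {f : PT n} {x : Fin n} : x ∈ pDom f ↔ ∃ a, f x = some a := by
  simp only [pDom, Finset.mem_filter, Finset.mem_univ, true_and, Option.isSome_iff_exists]

lemma mem_pIm {n : ℕ} {f : PT n} {b : Fin n} : b ∈ pIm f ↔ ∃ x, f x = some b := by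
  simp [pIm]

/-- key counting: for x in domain, #(im ≤ f x) = #(dom ≤ x) -/
lemma count_le {n : ℕ} {f : PT n} (hf : orderPres f) (hi : pInj f) {x a : Fin n}
    (hx : f x = some a) :
    ((pIm f).filter (· ≤ a)).card = ((pDom f).filter (· ≤ x)).card := by
  apply Finset.card_bij (i := fun b _hb => Classical.choose (mem_pIm.1 (by
      exact (Finset.mem_filter.1 _hb).1)))
  · intro b hb
    obtain ⟨hbi, hba⟩ := Finset.mem_filter.1 hb
    have hz := Classical.choose_spec (mem_pIm.1 hbi)
    set z := Classical.choose (mem_pIm.1 hbi)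
    refine Finset.mem_filter.2 ⟨mem_pDom.2 ⟨b, hz⟩, ?_⟩
    rcases le_total z x with h | h
    · exact h
    · have : a ≤ b := hf x z a b hx hz h
      have hab : b = a := le_antisymm hba this
      subst hab
      exact le_of_eq (hi z x b hz hx)
  · intro b₁ hb₁ b₂ hb₂ h
    have hz₁ := Classical.choose_spec (mem_pIm.1 (Finset.mem_filter.1 hb₁).1)
    have hz₂ := Classical.choose_spec (mem_pIm.1 (Finset.mem_filter.1 hb₂).1)
    rw [h] at hz₁
    rw [hz₁] at hz₂
    exact Option.some_inj.1 hz₂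
  · intro z hz
    obtain ⟨hzd, hzx⟩ := Finset.mem_filter.1 hz
    obtain ⟨b, hb⟩ := mem_pDom.1 hzd
    have hbi : b ∈ pIm f := mem_pIm.2 ⟨z, hb⟩
    have hba : b ≤ a := hf z x b a hb hx hzx
    refine ⟨b, Finset.mem_filter.2 ⟨hbi, hba⟩, ?_⟩
    have hspec := Classical.choose_spec (mem_pIm.1 (Finset.mem_filter.1
      (Finset.mem_filter.2 ⟨hbi, hba⟩ : b ∈ (pIm f).filter (· ≤ a))).1)
    exact hi _ _ b hspec hb

lemma filter_le_card_inj {n : ℕ} {s : Finset (Fin n)} {a b : Fin n} (ha : a ∈ s) (hb : b ∈ s)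
    (h : (s.filter (· ≤ a)).card = (s.filter (· ≤ b)).card) : a = b := by
  rcases lt_trichotomy a b with hab | hab | hab
  · exfalso
    have hsub : (s.filter (· ≤ a)) ⊆ (s.filter (· ≤ b)) := by
      intro x hx
      obtain ⟨h1, h2⟩ := Finset.mem_filter.1 hx
      exact Finset.mem_filter.2 ⟨h1, le_trans h2 hab.le⟩
    have hss : (s.filter (· ≤ a)) ⊂ (s.filter (· ≤ b)) :=
      (Finset.ssubset_iff_of_subset hsub).2
        ⟨b, Finset.mem_filter.2 ⟨hb, le_refl b⟩,
          fun hc => absurd ((Finset.mem_filter.1 hc).2) (not_le.2 hab)⟩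
    exact absurd h (Nat.ne_of_lt (Finset.card_lt_card hss))
  · exact hab
  · exfalso
    have hsub : (s.filter (· ≤ b)) ⊆ (s.filter (· ≤ a)) := by
      intro x hx
      obtain ⟨h1, h2⟩ := Finset.mem_filter.1 hx
      exact Finset.mem_filter.2 ⟨h1, le_trans h2 hab.le⟩
    have hss : (s.filter (· ≤ b)) ⊂ (s.filter (· ≤ a)) :=
      (Finset.ssubset_iff_of_subset hsub).2
        ⟨a, Finset.mem_filter.2 ⟨ha, le_refl a⟩,
          fun hc => absurd ((Finset.mem_filter.1 hc).2) (not_le.2 hab)⟩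
    exact absurd h.symm (Nat.ne_of_lt (Finset.card_lt_card hss))

/-- An order-preserving partial injection is determined by its domain and image. -/
lemma poi_ext {n : ℕ} {f g : PT n} (hf : orderPres f) (hfi : pInj f) (hg : orderPres g)
    (hgi : pInj g) (hd : pDom f = pDom g) (him : pIm f = pIm g) : f = g := by
  funext x
  by_cases hx : x ∈ pDom f
  · obtain ⟨a, ha⟩ := mem_pDom.1 hx
    obtain ⟨b, hb⟩ := mem_pDom.1 (hd ▸ hx)
    have h1 := count_le hf hfi ha
    have h2 := count_le hg hgi hb
    rw [← hd, ← him] at h2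
    have hai : a ∈ pIm f := mem_pIm.2 ⟨x, ha⟩
    have hbi : b ∈ pIm f := him ▸ mem_pIm.2 ⟨x, hb⟩
    rw [ha, hb, filter_le_card_inj hai hbi (h1.trans h2.symm)]
  · have hx' : x ∉ pDom g := hd ▸ hx
    cases h1 : f x with
    | some a => exact absurd (mem_pDom.2 ⟨a, h1⟩) hx
    | none =>
      cases h2 : g x with
      | some b => exact absurd (mem_pDom.2 ⟨b, h2⟩) hx'
      | none => rfl

lemma pIm_card {n : ℕ} {f : PT n} (hfi : pInj f) : (pIm f).card = (pDom f).card := by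
  apply Finset.card_bij (i := fun b hb => Classical.choose (mem_pIm.1 hb))
  · intro b hb
    exact mem_pDom.2 ⟨b, Classical.choose_spec (mem_pIm.1 hb)⟩
  · intro b₁ hb₁ b₂ hb₂ h
    have hz₁ := Classical.choose_spec (mem_pIm.1 hb₁)
    have hz₂ := Classical.choose_spec (mem_pIm.1 hb₂)
    rw [h] at hz₁
    rw [hz₁] at hz₂
    exact Option.some_inj.1 hz₂
  · intro z hz
    obtain ⟨b, hb⟩ := mem_pDom.1 hz
    refine ⟨b, mem_pIm.2 ⟨z, hb⟩, ?_⟩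
    exact hfi _ _ b (Classical.choose_spec (mem_pIm.1 (mem_pIm.2 ⟨z, hb⟩))) hb

/-- The order-preserving partial injection with domain `A` and image `B`. -/
noncomputable def mkPOI {n : ℕ} (A B : Finset (Fin n)) (h : A.card = B.card) : PT n :=
  fun x => if hx : x ∈ A then
    some ((B.orderIsoOfFin h.symm) ((A.orderIsoOfFin rfl).symm ⟨x, hx⟩) : Fin n)
  else none

lemma mkPOI_orderPres {n : ℕ} (A B : Finset (Fin n)) (h : A.card = B.card) :
    orderPres (mkPOI A B h) := by
  intro x y a b hx hy hxy
  unfold mkPOI at hx hy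
  split at hx
  case isFalse => exact absurd hx (by simp)
  case isTrue hxA =>
  split at hy
  case isFalse => exact absurd hy (by simp)
  case isTrue hyA =>
  rw [Option.some_inj] at hx hy
  subst hx; subst hy
  have h1 : (A.orderIsoOfFin rfl).symm ⟨x, hxA⟩ ≤ (A.orderIsoOfFin rfl).symm ⟨y, hyA⟩ :=
    (A.orderIsoOfFin rfl).symm.monotone (Subtype.mk_le_mk.2 hxy)
  exact Subtype.coe_le_coe.2 ((B.orderIsoOfFin h.symm).monotone h1)

lemma mkPOI_pInj {n : ℕ} (A B : Finset (Fin n)) (h : A.card = B.card) :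
    pInj (mkPOI A B h) := by
  intro x y a hx hy
  unfold mkPOI at hx hy
  split at hx
  case isFalse => exact absurd hx (by simp)
  case isTrue hxA =>
  split at hy
  case isFalse => exact absurd hy (by simp)
  case isTrue hyA =>
  rw [Option.some_inj] at hx hy
  rw [← hy] at hx
  have h1 := Subtype.coe_injective hx
  have h2 := (B.orderIsoOfFin h.symm).injective h1
  have h3 := (A.orderIsoOfFin rfl).symm.injective h2
  exact Subtype.mk_eq_mk.1 h3

lemma mkPOI_pDom {n : ℕ} (A B : Finset (Fin n)) (h : A.card = B.card) :
    pDom (mkPOI A B h) = A := by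
  ext x
  rw [mem_pDom]
  constructor
  · rintro ⟨a, ha⟩
    unfold mkPOI at ha
    split at ha
    case isTrue hxA => exact hxA
    case isFalse => exact absurd ha (by simp)
  · intro hxA
    exact ⟨_, dif_pos hxA⟩

lemma mkPOI_pIm {n : ℕ} (A B : Finset (Fin n)) (h : A.card = B.card) :
    pIm (mkPOI A B h) = B := by
  ext b
  rw [mem_pIm]
  constructor
  · rintro ⟨x, hx⟩
    unfold mkPOI at hx
    split at hx
    case isTrue hxA =>
      rw [Option.some_inj] at hx
      rw [← hx]
      exact ((B.orderIsoOfFin h.symm) _).2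
    case isFalse => exact absurd hx (by simp)
  · intro hb
    set i := (B.orderIsoOfFin h.symm).symm ⟨b, hb⟩ with hi
    set x := ((A.orderIsoOfFin rfl) i : Fin n) with hxdef
    have hxA : x ∈ A := ((A.orderIsoOfFin rfl) i).2
    refine ⟨x, ?_⟩
    unfold mkPOI
    rw [dif_pos hxA, Option.some_inj]
    have : (⟨x, hxA⟩ : {y // y ∈ A}) = (A.orderIsoOfFin rfl) i := Subtype.ext rfl
    rw [this, OrderIso.symm_apply_apply, hi, OrderIso.apply_symm_apply]

open scoped Classical in
lemma card_POI (n : ℕ) :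
    ((Finset.univ : Finset (PT n)).filter (fun f => orderPres f ∧ pInj f)).card
      = Nat.choose (2 * n) n := by
  have step1 : ((Finset.univ : Finset (PT n)).filter (fun f => orderPres f ∧ pInj f)).card
      = ((Finset.univ ×ˢ Finset.univ : Finset (Finset (Fin n) × Finset (Fin n))).filter
          (fun p => p.1.card = p.2.card)).card := by
    apply Finset.card_bij (i := fun f _hf => (pDom f, pIm f))
    · intro f hf
      obtain ⟨-, hp, hi⟩ := Finset.mem_filter.1 hf
      exact Finset.mem_filter.2 ⟨Finset.mem_product.2 ⟨Finset.mem_univ _, Finset.mem_univ _⟩,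
        (pIm_card hi).symm⟩
    · intro f hf g hg hfg
      obtain ⟨-, hfp, hfi⟩ := Finset.mem_filter.1 hf
      obtain ⟨-, hgp, hgi⟩ := Finset.mem_filter.1 hg
      exact poi_ext hfp hfi hgp hgi (congrArg Prod.fst hfg) (congrArg Prod.snd hfg)
    · intro p hp
      obtain ⟨-, hcard⟩ := Finset.mem_filter.1 hp
      refine ⟨mkPOI p.1 p.2 hcard, Finset.mem_filter.2 ⟨Finset.mem_univ _,
        mkPOI_orderPres _ _ _, mkPOI_pInj _ _ _⟩, ?_⟩
      rw [mkPOI_pDom, mkPOI_pIm]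
  have step2 : ((Finset.univ ×ˢ Finset.univ : Finset (Finset (Fin n) × Finset (Fin n))).filter
          (fun p => p.1.card = p.2.card)).card
      = ∑ k ∈ Finset.range (n + 1), Nat.choose n k * Nat.choose n k := by
    have hun : (Finset.univ ×ˢ Finset.univ : Finset (Finset (Fin n) × Finset (Fin n))).filter
          (fun p => p.1.card = p.2.card)
        = (Finset.range (n + 1)).biUnion (fun k =>
            Finset.powersetCard k Finset.univ ×ˢ Finset.powersetCard k Finset.univ) := by
      ext p
      simp only [Finset.mem_filter, Finset.mem_product, Finset.mem_univ, true_and,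
        Finset.mem_biUnion, Finset.mem_range, Finset.mem_powersetCard_univ]
      constructor
      · intro h
        refine ⟨p.1.card, ?_, rfl, h.symm⟩
        have := Finset.card_le_univ p.1
        simp only [Finset.card_univ, Fintype.card_fin] at this
        omega
      · rintro ⟨k, -, h1, h2⟩
        rw [h1, h2]
    rw [hun, Finset.card_biUnion]
    · apply Finset.sum_congr rfl
      intro k _
      rw [Finset.card_product, Finset.card_powersetCard, Finset.card_univ, Fintype.card_fin]
    · intro x _ y _ hxy
      rw [Function.onFun, Finset.disjoint_left]
      rintro p hp hq
      obtain ⟨h1, -⟩ := Finset.mem_product.1 hp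
      obtain ⟨h2, -⟩ := Finset.mem_product.1 hq
      rw [Finset.mem_powersetCard_univ] at h1 h2
      exact hxy (h1 ▸ h2 ▸ rfl)
  have step3 : ∑ k ∈ Finset.range (n + 1), Nat.choose n k * Nat.choose n k
      = Nat.choose (2 * n) n := by
    have := Nat.add_choose_eq n n n
    rw [Finset.Nat.sum_antidiagonal_eq_sum_range_succ_mk] at this
    rw [two_mul, this]
    apply Finset.sum_congr rfl
    intro k hk
    rw [Finset.mem_range] at hk
    rw [Nat.choose_symm (by omega : k ≤ n)]
  rw [step1, step2, step3]

lemma cr_lt {n : ℕ} {i x y : Fin (n + 1)} (hx : x ≠ i) (hy : y ≠ i) (hxy : x < y) :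
    i.cycleRange x < i.cycleRange y := by
  rcases lt_or_gt_of_ne hx with h1 | h1
  · rcases lt_or_gt_of_ne hy with h2 | h2
    · rw [Fin.lt_def, Fin.coe_cycleRange_of_lt h1, Fin.coe_cycleRange_of_lt h2]
      have := Fin.lt_def.1 hxy
      omega
    · rw [Fin.lt_def, Fin.coe_cycleRange_of_lt h1, Fin.cycleRange_of_gt h2]
      have ha := Fin.lt_def.1 h1
      have hb := Fin.lt_def.1 h2
      omega
  · have h2 : i < y := lt_trans h1 hxy
    rw [Fin.cycleRange_of_gt h1, Fin.cycleRange_of_gt h2]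
    exact hxy

lemma cr_ne_zero {n : ℕ} {i x : Fin (n + 1)} (hx : x ≠ i) : i.cycleRange x ≠ 0 := fun h =>
  hx (i.cycleRange.injective (h.trans (Fin.cycleRange_self i).symm))

/-- The unique permutation extending the increasing bijection from `univ \ {i}`
to `univ \ {j}`. -/
def sigma {n : ℕ} (i j : Fin (n + 1)) : Equiv.Perm (Fin (n + 1)) :=
  (Fin.cycleRange j)⁻¹ * Fin.cycleRange i

lemma sigma_apply_self {n : ℕ} (i j : Fin (n + 1)) : sigma i j i = j := by
  show (Fin.cycleRange j)⁻¹ (i.cycleRange i) = j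
  rw [Fin.cycleRange_self, ← Fin.cycleRange_self j, Equiv.Perm.inv_def, Equiv.symm_apply_apply]

lemma sigma_mono {n : ℕ} {i j x y : Fin (n + 1)} (hx : x ≠ i) (hy : y ≠ i) (hxy : x < y) :
    sigma i j x < sigma i j y := by
  have h1 : i.cycleRange x < i.cycleRange y := cr_lt hx hy hxy
  set u := sigma i j x with hu
  set v := sigma i j y with hv
  have hju : j.cycleRange u = i.cycleRange x := by
    rw [hu]; exact Equiv.apply_symm_apply _ _
  have hjv : j.cycleRange v = i.cycleRange y := by
    rw [hv]; exact Equiv.apply_symm_apply _ _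
  have huj : u ≠ j := fun h => cr_ne_zero hx (by rw [← hju, h, Fin.cycleRange_self])
  have hvj : v ≠ j := fun h => cr_ne_zero hy (by rw [← hjv, h, Fin.cycleRange_self])
  rcases lt_trichotomy u v with h | h | h
  · exact h
  · exact absurd (hju ▸ hjv ▸ congrArg j.cycleRange h) (ne_of_lt h1)
  · exact absurd (hjv ▸ hju ▸ cr_lt hvj huj h) (lt_asymm h1)

lemma sigma_sign {n : ℕ} (i j : Fin (n + 1)) :
    Equiv.Perm.sign (sigma i j) = (-1) ^ (i.val + j.val) := by
  show Equiv.Perm.sign ((Fin.cycleRange j)⁻¹ * Fin.cycleRange i) = _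
  rw [map_mul, map_inv, Fin.sign_cycleRange, Fin.sign_cycleRange, ← inv_pow, inv_neg, inv_one,
    pow_add, mul_comm]

/-- The restriction of `sigma i j` to `univ \ {i}`, as a partial map. -/
def fij {n : ℕ} (i j : Fin (n + 1)) : PT (n + 1) :=
  fun x => if x = i then none else some (sigma i j x)

lemma fij_orderPres {n : ℕ} (i j : Fin (n + 1)) : orderPres (fij i j) := by
  intro x y a b hx hy hxy
  unfold fij at hx hy
  split at hx
  case isTrue => exact absurd hx (by simp)
  case isFalse hxi =>
  split at hy
  case isTrue => exact absurd hy (by simp)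
  case isFalse hyi =>
  rw [Option.some_inj] at hx hy
  subst hx; subst hy
  rcases eq_or_lt_of_le hxy with h | h
  · subst h; exact le_refl _
  · exact (sigma_mono hxi hyi h).le

lemma fij_pInj {n : ℕ} (i j : Fin (n + 1)) : pInj (fij i j) := by
  intro x y a hx hy
  unfold fij at hx hy
  split at hx
  case isTrue => exact absurd hx (by simp)
  case isFalse hxi =>
  split at hy
  case isTrue => exact absurd hy (by simp)
  case isFalse hyi =>
  rw [Option.some_inj] at hx hy
  exact (sigma i j).injective (hx.trans hy.symm)

lemma fij_pDom {n : ℕ} (i j : Fin (n + 1)) : pDom (fij i j) = Finset.univ.erase i := by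
  ext x
  rw [mem_pDom, Finset.mem_erase]
  constructor
  · rintro ⟨a, ha⟩
    unfold fij at ha
    split at ha
    case isTrue => exact absurd ha (by simp)
    case isFalse hxi => exact ⟨hxi, Finset.mem_univ _⟩
  · rintro ⟨hxi, -⟩
    exact ⟨sigma i j x, if_neg hxi⟩

lemma fij_pIm {n : ℕ} (i j : Fin (n + 1)) : pIm (fij i j) = Finset.univ.erase j := by
  ext b
  rw [mem_pIm, Finset.mem_erase]
  constructor
  · rintro ⟨x, hx⟩
    unfold fij at hx
    split at hx
    case isTrue => exact absurd hx (by simp)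
    case isFalse hxi =>
      rw [Option.some_inj] at hx
      refine ⟨fun h => hxi ?_, Finset.mem_univ _⟩
      apply (sigma i j).injective
      rw [hx, h, sigma_apply_self]
  · rintro ⟨hbj, -⟩
    refine ⟨(sigma i j).symm b, ?_⟩
    unfold fij
    rw [if_neg, Option.some_inj]
    · exact (sigma i j).apply_symm_apply b
    · intro h
      apply hbj
      rw [← (sigma i j).apply_symm_apply b, h, sigma_apply_self]

lemma fij_extends {n : ℕ} (i j : Fin (n + 1)) : extendsTo (sigma i j) (fij i j) := by
  intro x a hx
  unfold fij at hx
  split at hx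
  case isTrue => exact absurd hx (by simp)
  case isFalse => exact Option.some_inj.1 hx

/-- A partial map whose domain misses exactly one point has at most one extension. -/
lemma extends_unique {n : ℕ} {f : PT n} {i : Fin n} (hd : pDom f = Finset.univ.erase i)
    {σ τ : Equiv.Perm (Fin n)} (hσ : extendsTo σ f) (hτ : extendsTo τ f) : σ = τ := by
  have hagree : ∀ x, x ≠ i → σ x = τ x := by
    intro x hx
    have hxd : x ∈ pDom f := by rw [hd]; exact Finset.mem_erase.2 ⟨hx, Finset.mem_univ _⟩
    obtain ⟨a, ha⟩ := mem_pDom.1 hxd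
    rw [hσ x a ha, hτ x a ha]
  refine Equiv.ext fun x => ?_
  by_cases hx : x = i
  · subst hx
    by_contra hne
    obtain ⟨y, hy⟩ : ∃ y, τ y = σ x := ⟨τ.symm (σ x), τ.apply_symm_apply _⟩
    by_cases hyi : y = x
    · exact hne (hyi ▸ hy).symm
    · exact hyi (σ.injective ((hagree y hyi).trans hy))
  · exact hagree x hx


lemma pid_orderPres (n : ℕ) : orderPres (pid n) := by
  intro x y a b hx hy hxy
  cases hx; cases hy; exact hxy

lemma pid_pInj (n : ℕ) : pInj (pid n) := by
  intro x y a hx hy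
  cases hx; cases hy; rfl

lemma pid_pDom (n : ℕ) : pDom (pid n) = Finset.univ := by
  ext x; simp [mem_pDom, pid]

lemma pid_pIm (n : ℕ) : pIm (pid n) = Finset.univ := by
  ext b; simpa [mem_pIm, pid] using ⟨b, rfl⟩

lemma range_filter_mod2 (c : ℕ) (n : ℕ) :
    ((Finset.range n).filter (fun x => x % 2 = c)).card
      = (if c = 0 then (n + 1) / 2 else if c = 1 then n / 2 else 0) := by
  induction n with
  | zero =>
    simp only [Finset.range_zero, Finset.filter_empty, Finset.card_empty]
    split <;> (try split) <;> omega
  | succ m ih =>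
    rw [Finset.range_add_one, Finset.filter_insert]
    by_cases h : m % 2 = c
    · rw [if_pos h, Finset.card_insert_of_notMem (fun hc =>
        Finset.notMem_range_self (Finset.mem_of_mem_filter m hc)), ih]
      split <;> (try split) <;> omega
    · rw [if_neg h, ih]
      split <;> (try split) <;> omega

lemma fin_filter_mod2 (c : ℕ) (n : ℕ) :
    ((Finset.univ : Finset (Fin n)).filter (fun i => i.val % 2 = c)).card
      = ((Finset.range n).filter (fun x => x % 2 = c)).card := by
  apply Finset.card_bij (i := fun a _ => a.val)
  · intro a ha
    exact Finset.mem_filter.2 ⟨Finset.mem_range.2 a.isLt, (Finset.mem_filter.1 ha).2⟩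
  · intro a _ b _ h
    exact Fin.ext h
  · intro b hb
    obtain ⟨hb1, hb2⟩ := Finset.mem_filter.1 hb
    exact ⟨⟨b, Finset.mem_range.1 hb1⟩, Finset.mem_filter.2 ⟨Finset.mem_univ _, hb2⟩, rfl⟩

lemma card_oddPairs (n : ℕ) :
    ((Finset.univ : Finset (Fin n × Fin n)).filter
      (fun p => (p.1.val + p.2.val) % 2 = 1)).card = n ^ 2 / 2 := by
  classical
  set E := (Finset.univ : Finset (Fin n)).filter (fun i => i.val % 2 = 0) with hE
  set O := (Finset.univ : Finset (Fin n)).filter (fun i => i.val % 2 = 1) with hO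
  have hEO : (Finset.univ : Finset (Fin n × Fin n)).filter
      (fun p => (p.1.val + p.2.val) % 2 = 1) = (E ×ˢ O) ∪ (O ×ˢ E) := by
    ext p
    simp only [Finset.mem_filter, Finset.mem_univ, true_and, Finset.mem_union,
      Finset.mem_product, hE, hO]
    omega
  have hdisj : Disjoint (E ×ˢ O) (O ×ˢ E) := by
    rw [Finset.disjoint_left]
    rintro p hp hq
    have h1 := (Finset.mem_product.1 hp).1
    have h2 := (Finset.mem_product.1 hq).1
    rw [hE, Finset.mem_filter] at h1
    rw [hO, Finset.mem_filter] at h2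
    omega
  have hecard : E.card = (n + 1) / 2 := by
    rw [hE, fin_filter_mod2, range_filter_mod2]; simp
  have hocard : O.card = n / 2 := by
    rw [hO, fin_filter_mod2, range_filter_mod2]; simp
  rw [hEO, Finset.card_union_of_disjoint hdisj, Finset.card_product, Finset.card_product,
    hecard, hocard]
  rcases Nat.even_or_odd n with ⟨k, hk⟩ | ⟨k, hk⟩
  · subst hk
    have h1 : (k + k + 1) / 2 = k := by omega
    have h2 : (k + k) / 2 = k := by omega
    have h3 : (k + k) ^ 2 = 2 * (2 * (k * k)) := by ring
    rw [h1, h2, h3, Nat.mul_div_cancel_left _ (by norm_num : 0 < 2)]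
    ring
  · subst hk
    have h1 : (2 * k + 1 + 1) / 2 = k + 1 := by omega
    have h2 : (2 * k + 1) / 2 = k := by omega
    have h3 : (2 * k + 1) ^ 2 = 2 * (2 * (k * (k + 1))) + 1 := by ring
    have h4 : (2 * (2 * (k * (k + 1))) + 1) / 2 = 2 * (k * (k + 1)) := by omega
    rw [h1, h2, h3, h4]
    ring


lemma erase_univ_inj {n : ℕ} {i j : Fin n} (h : Finset.univ.erase i = Finset.univ.erase j) :
    i = j := by
  by_contra hne
  have hmem : i ∈ Finset.univ.erase j := Finset.mem_erase.2 ⟨hne, Finset.mem_univ _⟩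
  rw [← h] at hmem
  exact (Finset.mem_erase.1 hmem).1 rfl

/-- the cardinality of `AO_n`. -/
theorem stmt2 {n : ℕ} (hn : 2 ≤ n) :
    (AO n).ncard = Nat.choose (2 * n) n - n ^ 2 / 2 := by
  classical
  obtain ⟨m, rfl⟩ : ∃ m, n = m + 1 := ⟨n - 1, by omega⟩
  set P := (Finset.univ : Finset (PT (m + 1))).filter (fun f => orderPres f ∧ pInj f) with hP
  have hAO : AO (m + 1) = ↑(P.filter (fun f => inAI f)) := by
    ext f
    simp only [AO, Set.mem_setOf_eq, Finset.coe_filter, Finset.mem_filter, Finset.mem_univ,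
      true_and, hP]
    constructor
    · rintro ⟨h1, h2⟩; exact ⟨⟨h1, h2.1⟩, h2⟩
    · rintro ⟨⟨h1, -⟩, h2⟩; exact ⟨h1, h2⟩
  rw [hAO, Set.ncard_coe_finset]
  have hsplit := Finset.card_filter_add_card_filter_not (s := P) (p := fun f => inAI f)
  have hPcard : P.card = Nat.choose (2 * (m + 1)) (m + 1) := by
    rw [hP, ← card_POI (m + 1)]
  have hbadcard : (P.filter (fun f => ¬ inAI f)).card = (m + 1) ^ 2 / 2 := by
    rw [← card_oddPairs (m + 1)]
    apply Eq.symm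
    apply Finset.card_bij (i := fun p _ => fij p.1 p.2)
    · intro p hp
      have hparity : (p.1.val + p.2.val) % 2 = 1 := (Finset.mem_filter.1 hp).2
      refine Finset.mem_filter.2 ⟨Finset.mem_filter.2 ⟨Finset.mem_univ _,
        fij_orderPres p.1 p.2, fij_pInj p.1 p.2⟩, ?_⟩
      rintro ⟨-, h | ⟨σ, hσ, hext⟩⟩
      · have hr : prank (fij p.1 p.2) = m := by
          unfold prank
          rw [fij_pDom, Finset.card_erase_of_mem (Finset.mem_univ _), Finset.card_univ,
            Fintype.card_fin]
          omega
        omega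
      · have hσeq : σ = sigma p.1 p.2 :=
          extends_unique (fij_pDom p.1 p.2) hext (fij_extends p.1 p.2)
        rw [Equiv.Perm.mem_alternatingGroup, hσeq, sigma_sign,
          Odd.neg_one_pow (Nat.odd_iff.2 hparity)] at hσ
        have := congrArg Units.val hσ
        norm_num at this
    · intro p hp q hq h
      have hd := congrArg pDom h
      rw [fij_pDom, fij_pDom] at hd
      have hi := congrArg pIm h
      rw [fij_pIm, fij_pIm] at hi
      exact Prod.ext (erase_univ_inj hd) (erase_univ_inj hi)
    · intro f hf
      obtain ⟨hfP, hnAI⟩ := Finset.mem_filter.1 hf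
      obtain ⟨-, hor, hinj⟩ := Finset.mem_filter.1 hfP
      have h1 : ¬ (prank f + 2 ≤ m + 1) := fun h => hnAI ⟨hinj, Or.inl h⟩
      have h2 : prank f ≤ m + 1 := by
        have := Finset.card_le_univ (pDom f)
        simpa [prank, Finset.card_univ] using this
      by_cases hr : prank f = m + 1
      · exfalso
        have hdom : pDom f = Finset.univ :=
          Finset.eq_univ_of_card _ (by rw [← prank, hr, Fintype.card_fin])
        have him : pIm f = Finset.univ :=
          Finset.eq_univ_of_card _ (by rw [pIm_card hinj, ← prank, hr, Fintype.card_fin])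
        have hfpid : f = pid (m + 1) := poi_ext hor hinj (pid_orderPres _) (pid_pInj _)
          (hdom.trans (pid_pDom _).symm) (him.trans (pid_pIm _).symm)
        apply hnAI
        refine ⟨hinj, Or.inr ⟨1, one_mem _, ?_⟩⟩
        intro x a hx
        rw [hfpid] at hx
        have hxa : x = a := Option.some_inj.1 hx
        rw [Equiv.Perm.one_apply, hxa]
      · have hrm : prank f = m := by omega
        have hdm : (Finset.univ \ pDom f).card = 1 := by
          rw [Finset.card_sdiff_of_subset (Finset.subset_univ _), Finset.card_univ, Fintype.card_fin,
            ← prank, hrm]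
          omega
        obtain ⟨i, hi⟩ := Finset.card_eq_one.1 hdm
        have hdom : pDom f = Finset.univ.erase i := by
          rw [Finset.erase_eq, ← hi, Finset.sdiff_sdiff_self_left]
          simp
        have hjm : (Finset.univ \ pIm f).card = 1 := by
          rw [Finset.card_sdiff_of_subset (Finset.subset_univ _), Finset.card_univ, Fintype.card_fin,
            pIm_card hinj, ← prank, hrm]
          omega
        obtain ⟨j, hj⟩ := Finset.card_eq_one.1 hjm
        have him : pIm f = Finset.univ.erase j := by
          rw [Finset.erase_eq, ← hj, Finset.sdiff_sdiff_self_left]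
          simp
        have hfe : f = fij i j := poi_ext hor hinj (fij_orderPres i j) (fij_pInj i j)
          (hdom.trans (fij_pDom i j).symm) (him.trans (fij_pIm i j).symm)
        refine ⟨(i, j), Finset.mem_filter.2 ⟨Finset.mem_univ _, ?_⟩, hfe.symm⟩
        rcases Nat.even_or_odd (i.val + j.val) with hev | hod
        · exfalso
          apply hnAI
          refine ⟨hinj, Or.inr ⟨sigma i j, ?_, ?_⟩⟩
          · rw [Equiv.Perm.mem_alternatingGroup, sigma_sign, Even.neg_one_pow hev]
          · rw [hfe]; exact fij_extends i j
        · exact Nat.odd_iff.1 hod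
  omega
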